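/- Let A be a finite-dimensional algebra, M a module with Hom_A(M, τM) = 0 (τ-rigid), and N any module. If 0 → N_t → N → N_f → 0 is the canonical sequence of N with respect to the torsion pair (Fac M, M^⊥), then for every quotient module N₀ of N, ⟨g_M, dim N₀⟩ ≤ ⟨g_M, dim N_f⟩ = dim_k Hom_A(N, τM), where g_M is the g-vector of M. -/
import Mathlib

section Aux

variable {k A : Type} [Field k] [Ring A] [Algebra k A]
variable {τM : Type} [AddCommGroup τM] [Module A τM] [Module k τM] [IsScalarTower k A τM]
  [FiniteDimensional k τM] [SMulCommClass A k τM]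

/-- Hom spaces into a finite-dimensional module from a finite-dimensional module are
finite-dimensional over the base field. -/
lemma homFinAux (X : Type) [AddCommGroup X] [Module A X] [Module k X] [IsScalarTower k A X]
    [FiniteDimensional k X] : Module.Finite k (X →ₗ[A] τM) := by
  refine Module.Finite.of_injective
    ({ toFun := fun f : X →ₗ[A] τM => (f.restrictScalars k : X →ₗ[k] τM),
       map_add' := fun _ _ => rfl, map_smul' := fun _ _ => rfl } :
      (X →ₗ[A] τM) →ₗ[k] (X →ₗ[k] τM)) ?_
  exact LinearMap.restrictScalars_injective k

/-- Precomposition with an `A`-linear map, as a `k`-linear map between Hom spaces. -/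
def compMapAux {N X : Type} [AddCommGroup N] [Module A N] [AddCommGroup X] [Module A X]
    (π : N →ₗ[A] X) : (X →ₗ[A] τM) →ₗ[k] (N →ₗ[A] τM) where
  toFun f := f.comp π
  map_add' f g := LinearMap.add_comp _ _ _
  map_smul' c f := LinearMap.smul_comp c f π

end Aux

/-- Let `M` be τ-rigid with AR translate `τM`, and `N` any module.  If
`0 → N_t → N → N_f → 0` is the canonical sequence of `N` with respect to the torsion pair
`(Fac M, M^⊥)` (so `N_t = S ∈ Fac M` and `N_f = N ⧸ S ∈ M^⊥`), then for every quotient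
module `N₀` of `N` one has `⟨g_M, dim N₀⟩ ≤ ⟨g_M, dim N_f⟩ = dim Hom_A(N, τM)`.
The g-vector `g_M` is characterized by the Auslander–Reiten formula. -/
theorem quotient_pairing_le_canonical (n : ℕ) (k A : Type) [Field k] [Ring A] [Algebra k A]
    [FiniteDimensional k A]
    (M : Type) [AddCommGroup M] [Module A M] [Module k M] [IsScalarTower k A M]
    [FiniteDimensional k M] [SMulCommClass A k M]
    (τM : Type) [AddCommGroup τM] [Module A τM] [Module k τM] [IsScalarTower k A τM]
    [FiniteDimensional k τM] [SMulCommClass A k τM]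
    (N : Type) [AddCommGroup N] [Module A N] [Module k N] [IsScalarTower k A N]
    [FiniteDimensional k N] [SMulCommClass A k N]
    (dimVec : (X : Type) → [AddCommGroup X] → [Module A X] → Fin n → ℕ)
    (gM : Fin n → ℤ)
    -- the Auslander–Reiten formula characterizing the g-vector of M
    (hAR : ∀ (X : Type) [AddCommGroup X] [Module A X] [Module k X] [IsScalarTower k A X]
        [FiniteDimensional k X] [SMulCommClass A k X],
      (∑ i, gM i * (dimVec X i : ℤ)) =
        (Module.finrank k (X →ₗ[A] τM) : ℤ) - (Module.finrank k (M →ₗ[A] X) : ℤ))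
    -- M is τ-rigid
    (hrigid : ∀ f : M →ₗ[A] τM, f = 0)
    -- canonical sequence: N_t = S ∈ Fac M, N_f = N ⧸ S ∈ M^⊥
    (S : Submodule A N)
    (hFac : ∃ (m : ℕ) (f : (Fin m → M) →ₗ[A] S), Function.Surjective f)
    (hperp : ∀ f : M →ₗ[A] (N ⧸ S), f = 0) :
    (∀ S₀ : Submodule A N,
      (∑ i, gM i * (dimVec (N ⧸ S₀) i : ℤ)) ≤ ∑ i, gM i * (dimVec (N ⧸ S) i : ℤ)) ∧
    (∑ i, gM i * (dimVec (N ⧸ S) i : ℤ)) = (Module.finrank k (N →ₗ[A] τM) : ℤ) := by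
  classical
  -- instances for quotients
  have instFD : ∀ S₀ : Submodule A N, FiniteDimensional k (N ⧸ S₀) := fun S₀ =>
    Module.Finite.of_surjective ((S₀.mkQ).restrictScalars k) (Submodule.mkQ_surjective S₀)
  have instTower : ∀ S₀ : Submodule A N, IsScalarTower k A (N ⧸ S₀) := fun S₀ => by
    constructor
    intro c a x
    induction x using Submodule.Quotient.induction_on with
    | H z =>
      rw [← Submodule.Quotient.mk_smul, ← Submodule.Quotient.mk_smul,
        ← Submodule.Quotient.mk_smul, smul_assoc]
  have instComm : ∀ S₀ : Submodule A N, SMulCommClass A k (N ⧸ S₀) := fun S₀ => by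
    constructor
    intro a c x
    induction x using Submodule.Quotient.induction_on with
    | H z =>
      rw [← Submodule.Quotient.mk_smul, ← Submodule.Quotient.mk_smul,
        ← Submodule.Quotient.mk_smul, ← Submodule.Quotient.mk_smul, smul_comm]
  haveI := instFD S
  haveI := instTower S
  haveI := instComm S
  haveI : Module.Finite k (N →ₗ[A] τM) := homFinAux (k := k) N
  -- every A-linear map N → τM kills S
  have hkill : ∀ f : N →ₗ[A] τM, S ≤ LinearMap.ker f := by
    obtain ⟨m, g, hg⟩ := hFac
    intro f s hs
    set h : (Fin m → M) →ₗ[A] τM := (f.comp S.subtype).comp g with hh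
    have h0 : h = 0 := by
      apply LinearMap.ext; intro x
      simp only [LinearMap.zero_apply]
      have hx : x = ∑ i, Pi.single i (x i) := (Finset.univ_sum_single x).symm
      rw [hx, map_sum]
      refine Finset.sum_eq_zero fun i _ => ?_
      have : h (Pi.single i (x i)) = (h.comp (LinearMap.single A (fun _ => M) i)) (x i) := rfl
      rw [this, hrigid (h.comp (LinearMap.single A (fun _ => M) i))]
      simp
    obtain ⟨x, hx⟩ := hg ⟨s, hs⟩
    have : f s = h x := by
      rw [hh]
      simp only [LinearMap.comp_apply, hx]
      rfl
    simpa [h0] using this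
  -- precomposition with mkQ is a k-linear bijection Hom(N⧸S, τM) ≃ Hom(N, τM)
  have hbij : Function.Bijective (compMapAux (k := k) (τM := τM) S.mkQ) := by
    constructor
    · intro f g hfg
      ext x
      exact LinearMap.congr_fun hfg x
    · intro f
      refine ⟨S.liftQ f (hkill f), ?_⟩
      ext x
      rfl
  have hrankS : Module.finrank k ((N ⧸ S) →ₗ[A] τM) = Module.finrank k (N →ₗ[A] τM) :=
    (LinearEquiv.ofBijective _ hbij).finrank_eq
  -- Hom(M, N⧸S) = 0
  haveI : Subsingleton (M →ₗ[A] (N ⧸ S)) :=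
    ⟨fun a b => (hperp a).trans (hperp b).symm⟩
  have hperp0 : Module.finrank k (M →ₗ[A] (N ⧸ S)) = 0 := Module.finrank_zero_of_subsingleton
  have hRHS : (∑ i, gM i * (dimVec (N ⧸ S) i : ℤ)) = (Module.finrank k (N →ₗ[A] τM) : ℤ) := by
    rw [hAR (N ⧸ S), hperp0, hrankS]
    simp
  refine ⟨fun S₀ => ?_, hRHS⟩
  haveI := instFD S₀
  haveI := instTower S₀
  haveI := instComm S₀
  rw [hAR (N ⧸ S₀), hRHS]
  have h1 : Module.finrank k ((N ⧸ S₀) →ₗ[A] τM) ≤ Module.finrank k (N →ₗ[A] τM) := by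
    refine LinearMap.finrank_le_finrank_of_injective
      (f := compMapAux (k := k) (τM := τM) S₀.mkQ) ?_
    intro f g hfg
    ext x
    exact LinearMap.congr_fun hfg x
  have h2 : (0 : ℤ) ≤ (Module.finrank k (M →ₗ[A] (N ⧸ S₀)) : ℤ) := Int.natCast_nonneg _
  omega
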